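/- Let M be a W*-bundle over a compact Hausdorff space X, Y ⊆ X closed, and M_Y = M/I_Y the restriction with induced conditional expectation E_Y onto C(Y). Then M_Y is itself a W*-bundle over Y: E_Y is tracial and faithful, and the closed unit ball of M_Y is complete in the norm ‖b‖_{2,u} = ‖E_Y(b*b)^{1/2}‖_{C(Y)}. Moreover the quotient map M → M_Y is a morphism of W*-bundles: it restricts to the map C(X) → C(Y) given by restriction of functions and intertwines E and E_Y. -/

import Mathlib

set_option linter.unusedSectionVars false

section Aux

variable {X M : Type*} [TopologicalSpace X] [CompactSpace X]
  [NormedRing M] [StarRing M] [NormedAlgebra ℂ M] [StarModule ℂ M]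
  (E : M →ₗ[ℂ] C(X, ℂ))

/-- conjugation compatibility -/
lemma st11_conj (hstar : ∀ a : M, E (star a) = star (E a)) (a : M) (x : X) :
    E (star a) x = starRingEnd ℂ (E a x) := by
  rw [hstar]; rfl

/-- Cauchy-Schwarz for the fibre states. -/
lemma st11_cs
    (hpos : ∀ (a : M) (x : X), 0 ≤ (E (star a * a) x).re ∧ (E (star a * a) x).im = 0)
    (hstar : ∀ a : M, E (star a) = star (E a)) (a b : M) (x : X) :
    ‖E (star a * b) x‖ ^ 2 ≤ (E (star a * a) x).re * (E (star b * b) x).re := by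
  set P : ℝ := (E (star a * a) x).re with hP
  set Q : ℝ := (E (star b * b) x).re with hQ
  set Z : ℂ := E (star a * b) x with hZdef
  have hZ' : E (star b * a) x = starRingEnd ℂ Z := by
    have : star b * a = star (star a * b) := by simp [star_mul]
    rw [this, st11_conj E hstar]
  have key : ∀ (t : ℝ) (c : ℂ), ‖c‖ = 1 →
      0 ≤ t ^ 2 * P + 2 * t * (c * Z).re + Q := by
    intro t c hc
    have h0 := (hpos ((t : ℂ) • a + c • b) x).1
    have hexp : star ((t : ℂ) • a + c • b) * ((t : ℂ) • a + c • b)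
        = ((t : ℂ) * t) • (star a * a) + ((t : ℂ) * c) • (star a * b)
          + (starRingEnd ℂ c * t) • (star b * a)
          + (starRingEnd ℂ c * c) • (star b * b) := by
      have hstt : star ((t : ℂ)) = (t : ℂ) := by
        rw [RCLike.star_def, Complex.conj_ofReal]
      rw [star_add, star_smul, star_smul, hstt, add_mul, mul_add, mul_add,
        smul_mul_smul_comm, smul_mul_smul_comm, smul_mul_smul_comm, smul_mul_smul_comm]
      rw [RCLike.star_def]
      abel
    rw [hexp] at h0
    simp only [map_add, map_smul, ContinuousMap.add_apply, ContinuousMap.smul_apply,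
      smul_eq_mul, Complex.add_re, hZ'] at h0
    have h1 : ((t : ℂ) * t * E (star a * a) x).re = t ^ 2 * P := by
      rw [← Complex.ofReal_mul, Complex.re_ofReal_mul]; ring_nf; rfl
    have h2 : ((t : ℂ) * c * Z).re = t * (c * Z).re := by
      rw [mul_assoc, Complex.re_ofReal_mul]
    have h3 : (starRingEnd ℂ c * t * starRingEnd ℂ Z).re = t * (c * Z).re := by
      have : starRingEnd ℂ c * t * starRingEnd ℂ Z = (t : ℂ) * starRingEnd ℂ (c * Z) := by
        rw [map_mul]; ring
      rw [this, Complex.re_ofReal_mul, Complex.conj_re]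
    have h4 : (starRingEnd ℂ c * c * E (star b * b) x).re = Q := by
      have hcc : starRingEnd ℂ c * c = 1 := by
        rw [mul_comm, Complex.mul_conj]
        norm_cast
        simp [← Complex.sq_norm, hc]
      rw [hcc, one_mul]
    rw [h1, h2, h3, h4] at h0
    linarith
  have hPn : 0 ≤ P := (hpos a x).1
  have hQn : 0 ≤ Q := (hpos b x).1
  by_cases hz : Z = 0
  · simp [hz]
    nlinarith [mul_nonneg hPn hQn]
  · set c : ℂ := -(starRingEnd ℂ Z) / (‖Z‖ : ℂ) with hcdef
    have habs : ‖c‖ = 1 := by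
      simp [hcdef, map_div₀, Complex.norm_real, abs_of_nonneg (norm_nonneg Z),
        div_self (norm_ne_zero_iff.mpr hz)]
    have hcz : (c * Z).re = -‖Z‖ := by
      have : c * Z = -(((‖Z‖ : ℝ)) : ℂ) := by
        have hn : (‖Z‖ : ℂ) ≠ 0 := by exact_mod_cast norm_ne_zero_iff.mpr hz
        rw [hcdef, neg_div, neg_mul, div_mul_eq_mul_div, mul_comm (starRingEnd ℂ Z),
          Complex.mul_conj, Complex.normSq_eq_norm_sq]
        push_cast
        rw [pow_two, mul_div_assoc, div_self hn, mul_one]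
      rw [this]
      simp
    have key2 : ∀ t : ℝ, 0 ≤ t ^ 2 * P - 2 * t * ‖Z‖ + Q := by
      intro t
      have := key t c habs
      rw [hcz] at this
      linarith
    have hd := discrim_le_zero (a := P) (b := -(2 * ‖Z‖)) (c := Q)
      (fun t => by nlinarith [key2 t])
    rw [discrim] at hd
    nlinarith [hd]


end Aux

/-- The ideal `I_Y = {a ∈ M : E(a*a)(y) = 0 for all y ∈ Y}`. -/
def resKer {X M : Type*} [TopologicalSpace X] [CompactSpace X] [NormedRing M] [StarRing M]
    [NormedAlgebra ℂ M] (E : M →ₗ[ℂ] C(X, ℂ)) (Y : Set X) : Set M :=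
  {a | ∀ y ∈ Y, E (star a * a) y = 0}

/-- The quotient C*-norm of the image of `a` in the restriction `M_Y = M/I_Y`. -/
noncomputable def resCNorm {X M : Type*} [TopologicalSpace X] [CompactSpace X] [NormedRing M]
    [StarRing M] [NormedAlgebra ℂ M] (E : M →ₗ[ℂ] C(X, ℂ)) (Y : Set X) (a : M) : ℝ :=
  sInf {r : ℝ | ∃ j ∈ resKer E Y, r = ‖a - j‖}

/-- The fibre 2-norm `‖a(x)‖_{2,τ_x} = E(a*a)(x)^{1/2}`. -/
noncomputable def fibTwoNorm {X M : Type*} [TopologicalSpace X] [CompactSpace X] [NormedRing M]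
    [StarRing M] [NormedAlgebra ℂ M] (E : M →ₗ[ℂ] C(X, ℂ)) (x : X) (a : M) : ℝ :=
  Real.sqrt ((E (star a * a) x).re)

section Aux2

set_option linter.unusedSectionVars false

variable {X M : Type*} [TopologicalSpace X] [CompactSpace X]
  [NormedRing M] [StarRing M] [NormedAlgebra ℂ M] [StarModule ℂ M]
  (E : M →ₗ[ℂ] C(X, ℂ))

lemma st11_fib_nonneg (x : X) (a : M) : 0 ≤ fibTwoNorm E x a := Real.sqrt_nonneg _

lemma st11_fib_sq
    (hpos : ∀ (a : M) (x : X), 0 ≤ (E (star a * a) x).re ∧ (E (star a * a) x).im = 0)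
    (x : X) (a : M) : fibTwoNorm E x a ^ 2 = (E (star a * a) x).re :=
  Real.sq_sqrt (hpos a x).1

lemma st11_fib_zero (x : X) : fibTwoNorm E x 0 = 0 := by
  simp [fibTwoNorm]

lemma st11_fib_neg (x : X) (a : M) : fibTwoNorm E x (-a) = fibTwoNorm E x a := by
  simp [fibTwoNorm]

lemma st11_fib_sub_symm (x : X) (a b : M) :
    fibTwoNorm E x (a - b) = fibTwoNorm E x (b - a) := by
  rw [← st11_fib_neg E x (b - a), neg_sub]

lemma st11_fib_triangle
    (hpos : ∀ (a : M) (x : X), 0 ≤ (E (star a * a) x).re ∧ (E (star a * a) x).im = 0)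
    (hstar : ∀ a : M, E (star a) = star (E a))
    (x : X) (a b : M) :
    fibTwoNorm E x (a + b) ≤ fibTwoNorm E x a + fibTwoNorm E x b := by
  have hP := (hpos a x).1
  have hQ := (hpos b x).1
  set P : ℝ := (E (star a * a) x).re
  set Q : ℝ := (E (star b * b) x).re
  set Z : ℂ := E (star a * b) x with hZdef
  have hZ' : E (star b * a) x = starRingEnd ℂ Z := by
    have : star b * a = star (star a * b) := by simp [star_mul]
    rw [this, st11_conj E hstar]
  have hcs := st11_cs E hpos hstar a b x
  have hexp : (E (star (a + b) * (a + b)) x).re = P + 2 * Z.re + Q := by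
    have : star (a + b) * (a + b) = star a * a + star a * b + star b * a + star b * b := by
      rw [star_add]; noncomm_ring
    rw [this]
    simp only [map_add, ContinuousMap.add_apply, Complex.add_re, hZ']
    have : (starRingEnd ℂ Z).re = Z.re := Complex.conj_re Z
    rw [this]; ring
  have habsle : Z.re ≤ Real.sqrt P * Real.sqrt Q := by
    have h1 : Z.re ≤ ‖Z‖ := Complex.re_le_norm Z
    have h2 : ‖Z‖ ≤ Real.sqrt (P * Q) := by
      rw [← Real.sqrt_sq (norm_nonneg Z)]
      exact Real.sqrt_le_sqrt hcs
    rw [Real.sqrt_mul hP] at h2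
    linarith
  unfold fibTwoNorm
  rw [hexp]
  have : P + 2 * Z.re + Q ≤ (Real.sqrt P + Real.sqrt Q) ^ 2 := by
    have hP2 : Real.sqrt P ^ 2 = P := Real.sq_sqrt hP
    have hQ2 : Real.sqrt Q ^ 2 = Q := Real.sq_sqrt hQ
    nlinarith
  calc Real.sqrt (P + 2 * Z.re + Q) ≤ Real.sqrt ((Real.sqrt P + Real.sqrt Q) ^ 2) :=
        Real.sqrt_le_sqrt this
    _ = Real.sqrt P + Real.sqrt Q := Real.sqrt_sq (by positivity)

lemma st11_fib_triangle4
    (hpos : ∀ (a : M) (x : X), 0 ≤ (E (star a * a) x).re ∧ (E (star a * a) x).im = 0)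
    (hstar : ∀ a : M, E (star a) = star (E a))
    (x : X) (a b c d : M) :
    fibTwoNorm E x (a + b + c + d) ≤ fibTwoNorm E x a + fibTwoNorm E x b
      + fibTwoNorm E x c + fibTwoNorm E x d := by
  have h1 := st11_fib_triangle E hpos hstar x (a + b + c) d
  have h2 := st11_fib_triangle E hpos hstar x (a + b) c
  have h3 := st11_fib_triangle E hpos hstar x a b
  linarith

lemma st11_fib_le_norm [CStarRing M]
    (hpos : ∀ (a : M) (x : X), 0 ≤ (E (star a * a) x).re ∧ (E (star a * a) x).im = 0)
    (hcontr : ∀ a : M, ‖E a‖ ≤ ‖a‖) (x : X) (a : M) :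
    fibTwoNorm E x a ≤ ‖a‖ := by
  have h1 : (E (star a * a) x).re ≤ ‖a‖ ^ 2 := by
    calc (E (star a * a) x).re ≤ ‖E (star a * a) x‖ :=
          Complex.re_le_norm _
      _ ≤ ‖E (star a * a)‖ := by
          exact ContinuousMap.norm_coe_le_norm _ x
      _ ≤ ‖star a * a‖ := hcontr _
      _ ≤ ‖star a‖ * ‖a‖ := norm_mul_le _ _
      _ = ‖a‖ ^ 2 := by rw [norm_star]; ring
  calc fibTwoNorm E x a ≤ Real.sqrt (‖a‖ ^ 2) := Real.sqrt_le_sqrt h1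
    _ = ‖a‖ := Real.sqrt_sq (norm_nonneg a)

lemma st11_fib_ker {Y : Set X} {j : M} (hj : j ∈ resKer E Y) {y : X} (hy : y ∈ Y) :
    fibTwoNorm E y j = 0 := by
  unfold fibTwoNorm
  rw [hj y hy]
  simp

/-- `E_Y` kills the ideal pointwise (Cauchy-Schwarz against 1). -/
lemma st11_ker_E_zero
    (hE1 : E 1 = 1)
    (hpos : ∀ (a : M) (x : X), 0 ≤ (E (star a * a) x).re ∧ (E (star a * a) x).im = 0)
    (hstar : ∀ a : M, E (star a) = star (E a))
    {Y : Set X} {j : M} (hj : j ∈ resKer E Y) {y : X} (hy : y ∈ Y) :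
    E j y = 0 := by
  have hcs := st11_cs E hpos hstar 1 j y
  rw [star_one, one_mul, mul_one, hE1, hj y hy] at hcs
  simp only [ContinuousMap.zero_apply, Complex.zero_re, mul_zero] at hcs
  have : ‖E j y‖ = 0 := by
    have := norm_nonneg (E j y)
    nlinarith
  exact norm_eq_zero.mp this

end Aux2



/-- complexification of a real-valued continuous function -/
def st11ofR {X : Type*} [TopologicalSpace X] (g : C(X, ℝ)) : C(X, ℂ) :=
  ⟨fun x => (g x : ℂ), Complex.continuous_ofReal.comp g.continuous⟩

section Aux3

set_option linter.unusedSectionVars false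

variable {X M : Type*} [TopologicalSpace X] [CompactSpace X]
  [NormedRing M] [StarRing M] [NormedAlgebra ℂ M] [StarModule ℂ M]

@[simp] lemma st11ofR_apply (g : C(X, ℝ)) (x : X) : st11ofR g x = (g x : ℂ) := rfl

lemma st11ofR_star (g : C(X, ℝ)) : star (st11ofR g) = st11ofR g := by
  ext x
  simp [ContinuousMap.star_apply, Complex.conj_ofReal]

lemma st11ofR_mul (g h : C(X, ℝ)) : st11ofR (g * h) = st11ofR g * st11ofR h := by
  ext x; simp

lemma st11ofR_one : st11ofR (1 : C(X, ℝ)) = 1 := by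
  ext x; simp

variable (E : M →ₗ[ℂ] C(X, ℂ)) (ι : C(X, ℂ) →⋆ₐ[ℂ] M)

/-- `E (star (ι h * c) * (ι h * c)) x = |h x|^2 * E (star c * c) x` -/
lemma st11_fib_smul
    (hcentral : ∀ (h : C(X, ℂ)) (a : M), ι h * a = a * ι h)
    (hmodule : ∀ (h : C(X, ℂ)) (a : M), E (ι h * a) = h * E a)
    (hpos : ∀ (a : M) (x : X), 0 ≤ (E (star a * a) x).re ∧ (E (star a * a) x).im = 0)
    (h : C(X, ℂ)) (c : M) (x : X) :
    fibTwoNorm E x (ι h * c) = ‖h x‖ * fibTwoNorm E x c := by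
  have hid : star (ι h * c) * (ι h * c) = ι (star h * h) * (star c * c) := by
    rw [star_mul, ← map_star]
    calc star c * ι (star h) * (ι h * c)
        = star c * (ι (star h) * ι h * c) := by noncomm_ring
      _ = star c * (ι (star h * h) * c) := by rw [map_mul]
      _ = star c * (c * ι (star h * h)) := by rw [hcentral]
      _ = ι (star h * h) * (star c * c) := by rw [hcentral]; noncomm_ring
  unfold fibTwoNorm
  rw [hid, hmodule]
  have : ((star h * h) * E (star c * c)) x = ((‖h x‖ ^ 2 : ℝ) : ℂ) * E (star c * c) x := by
    simp only [ContinuousMap.mul_apply, ContinuousMap.star_apply]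
    congr 1
    rw [RCLike.star_def, mul_comm, Complex.mul_conj, Complex.normSq_eq_norm_sq]
  rw [this, Complex.re_ofReal_mul, Real.sqrt_mul (by positivity), Real.sqrt_sq (by positivity)]

end Aux3

section Aux4

set_option linter.unusedSectionVars false

variable {X M : Type*} [TopologicalSpace X] [CompactSpace X]
  [NormedRing M] [StarRing M] [CStarRing M] [NormedAlgebra ℂ M] [StarModule ℂ M]
  [CompleteSpace M]
  (ι : C(X, ℂ) →⋆ₐ[ℂ] M)

/-- the convexity norm estimate: for a pointwise-`[0,1]` central function `g`,
`‖ι(1-g) a + ι(g) c‖ ≤ 1` whenever `‖a‖, ‖c‖ ≤ 1`. -/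
lemma st11_convex
    (hcentral : ∀ (h : C(X, ℂ)) (a : M), ι h * a = a * ι h)
    (g : C(X, ℝ)) (hg : ∀ x, g x ∈ Set.Icc (0 : ℝ) 1)
    (a c : M) (ha : ‖a‖ ≤ 1) (hc : ‖c‖ ≤ 1) :
    ‖ι (st11ofR ((1 : C(X, ℝ)) - g)) * a + ι (st11ofR g) * c‖ ≤ 1 := by
  letI : CStarAlgebra M := ⟨⟩
  letI := CStarAlgebra.spectralOrder M
  haveI := CStarAlgebra.spectralOrderedRing M
  -- positivity of central multipliers
  have hposι : ∀ h : C(X, ℝ), (∀ x, 0 ≤ h x) → ∀ m : M, 0 ≤ m → 0 ≤ ι (st11ofR h) * m := by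
    intro h hh m hm
    set s : C(X, ℝ) := ⟨fun x => Real.sqrt (h x), by fun_prop⟩ with hs
    have hss : st11ofR s * st11ofR s = st11ofR h := by
      ext x
      simp only [ContinuousMap.mul_apply, st11ofR_apply, hs, ContinuousMap.coe_mk]
      rw [← Complex.ofReal_mul, Real.mul_self_sqrt (hh x)]
    have key : ι (st11ofR h) * m = star (ι (st11ofR s)) * m * ι (st11ofR s) := by
      rw [← map_star, st11ofR_star]
      calc ι (st11ofR h) * m = ι (st11ofR s * st11ofR s) * m := by rw [hss]
        _ = ι (st11ofR s) * ι (st11ofR s) * m := by rw [map_mul]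
        _ = ι (st11ofR s) * (ι (st11ofR s) * m) := by rw [mul_assoc]
        _ = ι (st11ofR s) * (m * ι (st11ofR s)) := by rw [hcentral (st11ofR s) m]
        _ = ι (st11ofR s) * m * ι (st11ofR s) := (mul_assoc _ _ _).symm
    rw [key]
    exact star_left_conjugate_nonneg hm _
  have hmono : ∀ h : C(X, ℝ), (∀ x, 0 ≤ h x) → ∀ m n : M, m ≤ n →
      ι (st11ofR h) * m ≤ ι (st11ofR h) * n := by
    intro h hh m n hmn
    rw [← sub_nonneg, ← mul_sub]
    exact hposι h hh _ (sub_nonneg.mpr hmn)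
  set q : C(X, ℝ) := (1 : C(X, ℝ)) - g with hq
  have hq0 : ∀ x, 0 ≤ q x := fun x => by
    simp only [hq, ContinuousMap.sub_apply, ContinuousMap.one_apply]
    linarith [(hg x).2]
  have hg0 : ∀ x, 0 ≤ g x := fun x => (hg x).1
  set Q : M := ι (st11ofR q)
  set P : M := ι (st11ofR g)
  set u : M := Q * a + P * c with hu
  -- algebraic expansion
  have move : ∀ (f f' : C(X, ℂ)) (m n : M),
      (m * ι f) * (ι f' * n) = (ι f * ι f') * (m * n) := by
    intro f f' m n
    calc (m * ι f) * (ι f' * n) = (ι f * m) * (ι f' * n) := by rw [← hcentral f m]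
      _ = ι f * (m * ι f' * n) := by rw [mul_assoc, ← mul_assoc m]
      _ = ι f * (ι f' * m * n) := by rw [← hcentral f' m]
      _ = ι f * (ι f' * (m * n)) := by rw [mul_assoc (ι f') m n]
      _ = (ι f * ι f') * (m * n) := (mul_assoc _ _ _).symm
  have hstaru : star u = star a * Q + star c * P := by
    rw [hu, star_add, star_mul, star_mul, ← map_star, ← map_star, st11ofR_star, st11ofR_star]
  have hexp : star u * u = (Q * Q) * (star a * a) + (Q * P) * (star a * c)
      + (P * Q) * (star c * a) + (P * P) * (star c * c) := by
    rw [hstaru, hu, add_mul, mul_add, mul_add]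
    rw [move, move, move, move]
    abel
  -- order estimates
  have hPQ : P * Q = Q * P := by
    simp only [P, Q, ← map_mul, ← st11ofR_mul, mul_comm]
  have hcross : star a * c + star c * a ≤ star a * a + star c * c := by
    rw [← sub_nonneg]
    have hid : star a * a + star c * c - (star a * c + star c * a)
        = star (a - c) * (a - c) := by
      rw [star_sub]; noncomm_ring
    rw [hid]
    exact star_mul_self_nonneg _
  have hQP : Q * P = ι (st11ofR (q * g)) := by
    simp only [Q, P, ← map_mul, ← st11ofR_mul]
  have hQQ : Q * Q = ι (st11ofR (q * q)) := by
    simp only [Q, ← map_mul, ← st11ofR_mul]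
  have hPP : P * P = ι (st11ofR (g * g)) := by
    simp only [P, ← map_mul, ← st11ofR_mul]
  have step1 : star u * u ≤ (Q * Q) * (star a * a) + (Q * P) * (star a * a)
      + (Q * P) * (star c * c) + (P * P) * (star c * c) := by
    rw [hexp]
    have h1 : (Q * P) * (star a * c) + (P * Q) * (star c * a)
        = (Q * P) * (star a * c + star c * a) := by
      rw [hPQ, mul_add]
    have h2 : (Q * P) * (star a * c + star c * a) ≤ (Q * P) * (star a * a + star c * c) := by
      rw [hQP]
      exact hmono _ (fun x => mul_nonneg (hq0 x) (hg0 x)) _ _ hcross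
    calc (Q * Q) * (star a * a) + (Q * P) * (star a * c)
          + (P * Q) * (star c * a) + (P * P) * (star c * c)
        = (Q * Q) * (star a * a) + ((Q * P) * (star a * c + star c * a))
          + (P * P) * (star c * c) := by rw [← h1]; abel
      _ ≤ (Q * Q) * (star a * a) + ((Q * P) * (star a * a + star c * c))
          + (P * P) * (star c * c) := by
          exact add_le_add (add_le_add le_rfl h2) le_rfl
      _ = (Q * Q) * (star a * a) + (Q * P) * (star a * a)
          + (Q * P) * (star c * c) + (P * P) * (star c * c) := by
          rw [mul_add]; abel
  have hcollapse : (Q * Q) * (star a * a) + (Q * P) * (star a * a)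
      + (Q * P) * (star c * c) + (P * P) * (star c * c)
      = Q * (star a * a) + P * (star c * c) := by
    have e1 : Q * Q + Q * P = Q := by
      rw [hQQ, hQP, ← map_add]
      congr 1
      ext x
      simp only [ContinuousMap.add_apply, st11ofR_apply, ContinuousMap.mul_apply, hq,
        ContinuousMap.sub_apply, ContinuousMap.one_apply]
      push_cast
      ring
    have e2 : Q * P + P * P = P := by
      rw [hQP, hPP, ← map_add]
      congr 1
      ext x
      simp only [ContinuousMap.add_apply, st11ofR_apply, ContinuousMap.mul_apply, hq,
        ContinuousMap.sub_apply, ContinuousMap.one_apply]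
      push_cast
      ring
    calc (Q * Q) * (star a * a) + (Q * P) * (star a * a)
        + (Q * P) * (star c * c) + (P * P) * (star c * c)
        = (Q * Q + Q * P) * (star a * a) + (Q * P + P * P) * (star c * c) := by
          rw [add_mul, add_mul]; abel
      _ = Q * (star a * a) + P * (star c * c) := by rw [e1, e2]
  have haa : star a * a ≤ 1 := by
    rw [← CStarAlgebra.norm_le_one_iff_of_nonneg _ (star_mul_self_nonneg a)]
    rw [CStarRing.norm_star_mul_self]
    nlinarith [norm_nonneg a]
  have hcc : star c * c ≤ 1 := by
    rw [← CStarAlgebra.norm_le_one_iff_of_nonneg _ (star_mul_self_nonneg c)]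
    rw [CStarRing.norm_star_mul_self]
    nlinarith [norm_nonneg c]
  have step2 : Q * (star a * a) + P * (star c * c) ≤ 1 := by
    have h1 : Q * (star a * a) ≤ Q * 1 := hmono _ hq0 _ _ haa
    have h2 : P * (star c * c) ≤ P * 1 := hmono _ hg0 _ _ hcc
    have h3 : Q * 1 + P * 1 = 1 := by
      rw [mul_one, mul_one]
      show ι (st11ofR q) + ι (st11ofR g) = 1
      rw [← map_add, ← map_one ι]
      congr 1
      rw [← st11ofR_one]
      ext x
      simp only [ContinuousMap.add_apply, st11ofR_apply, hq, ContinuousMap.sub_apply,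
        ContinuousMap.one_apply]
      push_cast
      ring
    calc Q * (star a * a) + P * (star c * c) ≤ Q * 1 + P * 1 := add_le_add h1 h2
      _ = 1 := h3
  have hfinal : star u * u ≤ 1 := le_trans step1 (hcollapse ▸ step2)
  have hn : ‖star u * u‖ ≤ 1 :=
    (CStarAlgebra.norm_le_one_iff_of_nonneg _ (star_mul_self_nonneg u)).mpr hfinal
  rw [CStarRing.norm_star_mul_self] at hn
  nlinarith [norm_nonneg u]

end Aux4

section Aux5

set_option linter.unusedSectionVars false

variable {X M : Type*} [TopologicalSpace X] [CompactSpace X] [T2Space X]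
  [NormedRing M] [StarRing M] [NormedAlgebra ℂ M] [StarModule ℂ M]
  (E : M →ₗ[ℂ] C(X, ℂ))

lemma st11_fib_le_sqrt_norm (x : X) (c : M)
    (hpos : ∀ (a : M) (x : X), 0 ≤ (E (star a * a) x).re ∧ (E (star a * a) x).im = 0) :
    fibTwoNorm E x c ≤ Real.sqrt ‖E (star c * c)‖ := by
  apply Real.sqrt_le_sqrt
  calc (E (star c * c) x).re ≤ ‖E (star c * c) x‖ := Complex.re_le_norm _
    _ = ‖E (star c * c) x‖ := rfl
    _ ≤ ‖E (star c * c)‖ := ContinuousMap.norm_coe_le_norm _ x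

lemma st11_urysohn {Y : Set X} (hY : IsClosed Y) (c : M) (δ : ℝ)
    (hb : ∀ y ∈ Y, (E (star c * c) y).re < δ) :
    ∃ g : C(X, ℝ), (∀ x, g x ∈ Set.Icc (0 : ℝ) 1) ∧ (∀ y ∈ Y, g y = 1) ∧
      (∀ x, g x ≠ 0 → (E (star c * c) x).re < δ) := by
  have hcont : Continuous fun x => (E (star c * c) x).re :=
    Complex.continuous_re.comp (E (star c * c)).continuous
  have hUopen : IsOpen {x | (E (star c * c) x).re < δ} := isOpen_lt hcont continuous_const
  obtain ⟨f, hf0, hf1, hf01⟩ := exists_continuous_zero_one_of_isClosed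
    (isClosed_compl_iff.mpr hUopen) hY
    (Set.disjoint_left.mpr fun x hx hxY => hx (hb x hxY))
  refine ⟨f, hf01, fun y hy => by simpa using hf1 hy, fun x hgx => ?_⟩
  by_contra hnot
  exact hgx (by simpa using hf0 hnot)

lemma st11_zero_mem_ker (Y : Set X) : (0 : M) ∈ resKer E Y := by
  intro y hy
  simp

lemma st11_resCNorm_bdd (Y : Set X) (b : M) :
    BddBelow {r : ℝ | ∃ j ∈ resKer E Y, r = ‖b - j‖} :=
  ⟨0, fun r ⟨j, _, hr⟩ => hr ▸ norm_nonneg _⟩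

lemma st11_resCNorm_le_norm (Y : Set X) (b : M) : resCNorm E Y b ≤ ‖b‖ := by
  have : ‖b‖ ∈ {r : ℝ | ∃ j ∈ resKer E Y, r = ‖b - j‖} :=
    ⟨0, st11_zero_mem_ker E Y, by simp⟩
  exact csInf_le (st11_resCNorm_bdd E Y b) this

lemma st11_exists_lift (Y : Set X) (b : M) (h : resCNorm E Y b ≤ 1) {ε : ℝ} (hε : 0 < ε) :
    ∃ j ∈ resKer E Y, ‖b - j‖ < 1 + ε := by
  have hne : {r : ℝ | ∃ j ∈ resKer E Y, r = ‖b - j‖}.Nonempty :=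
    ⟨‖b - 0‖, 0, st11_zero_mem_ker E Y, rfl⟩
  have hlt : sInf {r : ℝ | ∃ j ∈ resKer E Y, r = ‖b - j‖} < 1 + ε :=
    lt_of_le_of_lt h (by linarith)
  obtain ⟨r, ⟨j, hj, rfl⟩, hr⟩ := exists_lt_of_csInf_lt hne hlt
  exact ⟨j, hj, hr⟩

end Aux5

set_option maxHeartbeats 1000000 in
/-- the restriction `M_Y = M/I_Y` of a W*-bundle to a closed `Y ⊆ X` is a
W*-bundle over `Y`: the induced expectation `E_Y` is well defined, tracial and faithful, the
closed unit ball of `M_Y` is complete in `‖E_Y(b*b)^{1/2}‖_{C(Y)}`, and the quotient map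
`M → M_Y` is a morphism of W*-bundles (it restricts to restriction `C(X) → C(Y)` and
intertwines `E` and `E_Y`). Everything is phrased via representatives in `M`. -/
theorem stmt11 {X M : Type*} [TopologicalSpace X] [CompactSpace X] [T2Space X]
    [NormedRing M] [StarRing M] [CStarRing M] [NormedAlgebra ℂ M]
    [StarModule ℂ M] [CompleteSpace M]
    (E : M →ₗ[ℂ] C(X, ℂ))
    (hE1 : E 1 = 1)
    (htr : ∀ a b : M, E (a * b) = E (b * a))
    (hpos : ∀ (a : M) (x : X), 0 ≤ (E (star a * a) x).re ∧ (E (star a * a) x).im = 0)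
    (hstar : ∀ a : M, E (star a) = star (E a))
    (hfaith : ∀ a : M, E (star a * a) = 0 → a = 0)
    (hcontr : ∀ a : M, ‖E a‖ ≤ ‖a‖)
    (ι : C(X, ℂ) →⋆ₐ[ℂ] M)
    (hcentral : ∀ (h : C(X, ℂ)) (a : M), ι h * a = a * ι h)
    (hEι : ∀ h : C(X, ℂ), E (ι h) = h)
    (hmodule : ∀ (h : C(X, ℂ)) (a : M), E (ι h * a) = h * E a)
    -- completeness axiom (C) upstairs
    (hcomp : ∀ u : ℕ → M, (∀ n, ‖u n‖ ≤ 1) →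
      (∀ ε > (0 : ℝ), ∃ N, ∀ m ≥ N, ∀ n ≥ N, Real.sqrt ‖E (star (u m - u n) * (u m - u n))‖ < ε) →
      ∃ b : M, ‖b‖ ≤ 1 ∧
        ∀ ε > (0 : ℝ), ∃ N, ∀ n ≥ N, Real.sqrt ‖E (star (u n - b) * (u n - b))‖ < ε)
    (Y : Set X) (hY : IsClosed Y) :
    -- E_Y is well defined on M_Y (intertwining of E and E_Y by the quotient map)
    (∀ a b : M, a - b ∈ resKer E Y → ∀ y ∈ Y, E a y = E b y) ∧
    -- E_Y is tracial
    (∀ a b : M, ∀ y ∈ Y, E (a * b) y = E (b * a) y) ∧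
    -- E_Y is faithful: E_Y((a|_Y)* (a|_Y)) = 0 → a|_Y = 0
    (∀ a : M, (∀ y ∈ Y, E (star a * a) y = 0) → a ∈ resKer E Y) ∧
    -- the quotient map restricts to restriction of functions C(X) → C(Y)
    (∀ h : C(X, ℂ), (∀ y ∈ Y, h y = 0) → ι h ∈ resKer E Y) ∧
    -- axiom (C) for M_Y: the closed unit ball is complete in the uniform 2-norm over Y
    (∀ a : ℕ → M, (∀ n, resCNorm E Y (a n) ≤ 1) →
      (∀ ε > (0 : ℝ), ∃ N, ∀ m ≥ N, ∀ n ≥ N, ∀ y ∈ Y, fibTwoNorm E y (a m - a n) < ε) →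
      ∃ b : M, resCNorm E Y b ≤ 1 ∧
        ∀ ε > (0 : ℝ), ∃ N, ∀ n ≥ N, ∀ y ∈ Y, fibTwoNorm E y (a n - b) < ε) := by
  classical
  refine ⟨?_, ?_, ?_, ?_, ?_⟩
  · -- well-definedness
    intro a b hab y hy
    have h0 : E (a - b) y = 0 := st11_ker_E_zero E hE1 hpos hstar hab hy
    rw [map_sub, ContinuousMap.sub_apply] at h0
    exact sub_eq_zero.mp h0
  · -- traciality
    intro a b y hy
    rw [htr a b]
  · -- faithfulness
    intro a h
    exact h
  · -- quotient map restricts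
    intro h hh y hy
    have hid : star (ι h) * ι h = ι (star h * h) := by rw [← map_star, ← map_mul]
    rw [hid, hEι]
    simp [ContinuousMap.mul_apply, hh y hy]
  · -- completeness
    intro a ha hC
    set e : ℕ → ℝ := fun n => (2 : ℝ)⁻¹ ^ n with he
    have he_pos : ∀ n, 0 < e n := fun n => by positivity
    have he_mono : ∀ {m n : ℕ}, m ≤ n → e n ≤ e m := fun {m n} hmn =>
      pow_le_pow_of_le_one (by norm_num) (by norm_num) hmn
    have he_succ : ∀ n, e (n + 1) = e n * 2⁻¹ := fun n => pow_succ _ _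
    -- Step 1: lifts with norm slightly above 1
    have hlift : ∀ n, ∃ j ∈ resKer E Y, ‖a n - j‖ < 1 + e n :=
      fun n => st11_exists_lift E Y (a n) (ha n) (he_pos n)
    choose j hjker hjnorm using hlift
    set t : ℕ → M := fun n => a n - j n with ht
    have htnorm : ∀ n, ‖t n‖ ≤ 1 + e n := fun n => (hjnorm n).le
    set s : ℕ → M := fun n => (((1 + e n)⁻¹ : ℝ) : ℂ) • t n with hs
    have h1e : ∀ n, (0:ℝ) < 1 + e n := fun n => by linarith [he_pos n]
    have hsnorm : ∀ n, ‖s n‖ ≤ 1 := by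
      intro n
      rw [hs]
      simp only [norm_smul, Complex.norm_real, Real.norm_eq_abs]
      rw [abs_of_nonneg (by positivity)]
      rw [inv_mul_le_iff₀ (h1e n), mul_one]
      exact htnorm n
    have hst : ∀ n, ‖s n - t n‖ ≤ e n := by
      intro n
      have hid : s n - t n = ((((1 + e n)⁻¹ - 1 : ℝ)) : ℂ) • t n := by
        rw [hs]
        push_cast
        rw [sub_smul, one_smul]
      rw [hid, norm_smul, Complex.norm_real, Real.norm_eq_abs]
      have habs : |(1 + e n)⁻¹ - 1| = 1 - (1 + e n)⁻¹ := by
        rw [abs_of_nonpos]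
        · ring
        · have : (1 + e n)⁻¹ ≤ 1 := by
            rw [inv_le_one_iff₀]
            right; linarith [he_pos n]
          linarith
      rw [habs]
      have h2 : (1 - (1 + e n)⁻¹) * (1 + e n) = e n := by
        rw [sub_mul, inv_mul_cancel₀ (h1e n).ne', one_mul]; ring
      calc (1 - (1 + e n)⁻¹) * ‖t n‖ ≤ (1 - (1 + e n)⁻¹) * (1 + e n) := by
            apply mul_le_mul_of_nonneg_left (htnorm n)
            have : (1 + e n)⁻¹ ≤ 1 := by
              rw [inv_le_one_iff₀]; right; linarith [he_pos n]
            linarith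
        _ = e n := h2
    have hfib_as : ∀ n, ∀ y ∈ Y, fibTwoNorm E y (a n - s n) ≤ e n := by
      intro n y hy
      have hdec : a n - s n = j n + (t n - s n) := by rw [ht]; beta_reduce; abel
      calc fibTwoNorm E y (a n - s n)
          ≤ fibTwoNorm E y (j n) + fibTwoNorm E y (t n - s n) := by
            rw [hdec]; exact st11_fib_triangle E hpos hstar y _ _
        _ ≤ 0 + ‖t n - s n‖ := by
            rw [st11_fib_ker E (hjker n) hy]
            exact add_le_add le_rfl (st11_fib_le_norm E hpos hcontr y _)
        _ ≤ e n := by rw [zero_add, norm_sub_rev]; exact hst n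
    -- Step 2: index selection
    have hN : ∀ k : ℕ, ∃ N, ∀ m ≥ N, ∀ n ≥ N, ∀ y ∈ Y,
        fibTwoNorm E y (a m - a n) < e (k + 3) := fun k => hC (e (k + 3)) (he_pos _)
    choose N0 hN0 using hN
    set NN : ℕ → ℕ := fun k => max (k + 3) (Finset.sup (Finset.range (k + 1)) N0) with hNN
    have hNN_ge1 : ∀ k, k + 3 ≤ NN k := fun k => le_max_left _ _
    have hNN_geN0 : ∀ {i k : ℕ}, i ≤ k → N0 i ≤ NN k := by
      intro i k hik
      exact le_trans (Finset.le_sup (Finset.mem_range.mpr (Nat.lt_succ_of_le hik)))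
        (le_max_right _ _)
    set v : ℕ → M := fun k => s (NN k) with hv
    have hv_norm : ∀ k, ‖v k‖ ≤ 1 := fun k => hsnorm _
    have hvfib : ∀ k, ∀ y ∈ Y, fibTwoNorm E y (v (k + 1) - v k) < e (k + 1) := by
      intro k y hy
      have h1 : fibTwoNorm E y (a (NN (k + 1)) - a (NN k)) < e (k + 3) :=
        hN0 k _ (hNN_geN0 (Nat.le_succ k)) _ (hNN_geN0 le_rfl) y hy
      have h2 : fibTwoNorm E y (s (NN (k + 1)) - a (NN (k + 1))) ≤ e (k + 3) := by
        rw [st11_fib_sub_symm]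
        exact le_trans (hfib_as _ y hy) (he_mono (le_trans (by omega) (hNN_ge1 (k + 1))))
      have h3 : fibTwoNorm E y (a (NN k) - s (NN k)) ≤ e (k + 3) :=
        le_trans (hfib_as _ y hy) (he_mono (hNN_ge1 k))
      have hdec : v (k + 1) - v k = (s (NN (k + 1)) - a (NN (k + 1)))
          + (a (NN (k + 1)) - a (NN k)) + (a (NN k) - s (NN k)) := by
        rw [hv]; abel
      have htri : fibTwoNorm E y (v (k + 1) - v k)
          ≤ fibTwoNorm E y (s (NN (k + 1)) - a (NN (k + 1)))
            + fibTwoNorm E y (a (NN (k + 1)) - a (NN k))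
            + fibTwoNorm E y (a (NN k) - s (NN k)) := by
        rw [hdec]
        have t1 := st11_fib_triangle E hpos hstar y
          ((s (NN (k + 1)) - a (NN (k + 1))) + (a (NN (k + 1)) - a (NN k))) (a (NN k) - s (NN k))
        have t2 := st11_fib_triangle E hpos hstar y
          (s (NN (k + 1)) - a (NN (k + 1))) (a (NN (k + 1)) - a (NN k))
        linarith
      have harith : e (k + 3) + e (k + 3) + e (k + 3) < e (k + 1) := by
        have e1 := he_succ (k + 1)
        have e2 := he_succ (k + 2)
        have e3 : e (k + 3) = e (k + 2) * 2⁻¹ := he_succ (k + 2)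
        have := he_pos (k + 1)
        have h4 : e (k + 3) = e (k + 1) * 4⁻¹ := by
          rw [e3, he_succ (k + 1)]; ring
        rw [h4]
        linarith
      linarith
    -- Step 3: the recursive correction
    have hury : ∀ (k : ℕ) (m : M),
        (∀ y ∈ Y, (E (star (v (k + 1) - m) * (v (k + 1) - m)) y).re < e (k + 1) ^ 2) →
        ∃ g : C(X, ℝ), (∀ x, g x ∈ Set.Icc (0 : ℝ) 1) ∧ (∀ y ∈ Y, g y = 1) ∧
          (∀ x, g x ≠ 0 → (E (star (v (k + 1) - m) * (v (k + 1) - m)) x).re < e (k + 1) ^ 2) :=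
      fun k m h => st11_urysohn E hY _ _ h
    set pick : ℕ → M → C(X, ℝ) := fun k m =>
      if h : ∀ y ∈ Y, (E (star (v (k + 1) - m) * (v (k + 1) - m)) y).re < e (k + 1) ^ 2
      then (hury k m h).choose else 1 with hpick
    set w : ℕ → M := fun k => Nat.rec (v 0)
      (fun k wk => ι (st11ofR ((1 : C(X, ℝ)) - pick k wk)) * wk
        + ι (st11ofR (pick k wk)) * v (k + 1)) k with hwdef
    have hw0 : w 0 = v 0 := rfl
    have hwsucc : ∀ k, w (k + 1) = ι (st11ofR ((1 : C(X, ℝ)) - pick k (w k))) * w k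
        + ι (st11ofR (pick k (w k))) * v (k + 1) := fun k => rfl
    -- the invariant
    have hInv : ∀ k, ‖w k‖ ≤ 1 ∧ (∀ y ∈ Y, fibTwoNorm E y (w k - v k) = 0) := by
      intro k
      induction k with
      | zero =>
        refine ⟨hv_norm 0, fun y hy => ?_⟩
        rw [hw0, sub_self, st11_fib_zero]
      | succ k ih =>
        obtain ⟨ihn, ihf⟩ := ih
        have hcond : ∀ y ∈ Y,
            (E (star (v (k + 1) - w k) * (v (k + 1) - w k)) y).re < e (k + 1) ^ 2 := by
          intro y hy
          have hfb : fibTwoNorm E y (v (k + 1) - w k) < e (k + 1) := by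
            have hdec : v (k + 1) - w k = (v (k + 1) - v k) + (v k - w k) := by abel
            have h2 : fibTwoNorm E y (v k - w k) = 0 := by
              rw [st11_fib_sub_symm]; exact ihf y hy
            have htri := st11_fib_triangle E hpos hstar y (v (k + 1) - v k) (v k - w k)
            rw [← hdec] at htri
            have := hvfib k y hy
            linarith [htri, h2, this]
          rw [← st11_fib_sq E hpos y (v (k + 1) - w k)]
          exact pow_lt_pow_left₀ hfb (st11_fib_nonneg E y _) two_ne_zero
        have hgdef : pick k (w k) = (hury k (w k) hcond).choose := by
          rw [hpick]; exact dif_pos hcond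
        obtain ⟨hg01, hgY, hgU⟩ := (hury k (w k) hcond).choose_spec
        rw [← hgdef] at hg01 hgY hgU
        constructor
        · rw [hwsucc k]
          exact st11_convex ι hcentral _ hg01 _ _ ihn (hv_norm (k + 1))
        · intro y hy
          have hAB : ι (st11ofR ((1 : C(X, ℝ)) - pick k (w k)))
              + ι (st11ofR (pick k (w k))) = 1 := by
            rw [← map_add, ← map_one ι]
            congr 1
            ext x
            simp only [ContinuousMap.add_apply, st11ofR_apply, ContinuousMap.sub_apply,
              ContinuousMap.one_apply]
            push_cast
            ring
          have hid : w (k + 1) - v (k + 1)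
              = ι (st11ofR ((1 : C(X, ℝ)) - pick k (w k))) * (w k - v (k + 1)) := by
            calc w (k + 1) - v (k + 1)
                = ι (st11ofR ((1 : C(X, ℝ)) - pick k (w k))) * w k
                  + ι (st11ofR (pick k (w k))) * v (k + 1) - v (k + 1) := by rw [hwsucc k]
              _ = ι (st11ofR ((1 : C(X, ℝ)) - pick k (w k))) * w k
                  + ι (st11ofR (pick k (w k))) * v (k + 1)
                  - (ι (st11ofR ((1 : C(X, ℝ)) - pick k (w k)))
                    + ι (st11ofR (pick k (w k)))) * v (k + 1) := by rw [hAB, one_mul]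
              _ = ι (st11ofR ((1 : C(X, ℝ)) - pick k (w k))) * (w k - v (k + 1)) := by
                  noncomm_ring
          rw [hid, st11_fib_smul E ι hcentral hmodule hpos]
          have hzero : ((1 : C(X, ℝ)) - pick k (w k)) y = 0 := by
            simp [ContinuousMap.sub_apply, hgY y hy]
          rw [st11ofR_apply, hzero]
          simp
    -- the per-step global bound
    have hstep : ∀ k, ∀ x, fibTwoNorm E x (w (k + 1) - w k) ≤ e (k + 1) := by
      intro k x
      obtain ⟨ihn, ihf⟩ := hInv k
      have hcond : ∀ y ∈ Y,
          (E (star (v (k + 1) - w k) * (v (k + 1) - w k)) y).re < e (k + 1) ^ 2 := by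
        intro y hy
        have hfb : fibTwoNorm E y (v (k + 1) - w k) < e (k + 1) := by
          have hdec : v (k + 1) - w k = (v (k + 1) - v k) + (v k - w k) := by abel
          have h2 : fibTwoNorm E y (v k - w k) = 0 := by
            rw [st11_fib_sub_symm]; exact ihf y hy
          have htri := st11_fib_triangle E hpos hstar y (v (k + 1) - v k) (v k - w k)
          rw [← hdec] at htri
          have := hvfib k y hy
          linarith [htri, h2, this]
        rw [← st11_fib_sq E hpos y (v (k + 1) - w k)]
        exact pow_lt_pow_left₀ hfb (st11_fib_nonneg E y _) two_ne_zero
      have hgdef : pick k (w k) = (hury k (w k) hcond).choose := by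
        rw [hpick]; exact dif_pos hcond
      obtain ⟨hg01, hgY, hgU⟩ := (hury k (w k) hcond).choose_spec
      rw [← hgdef] at hg01 hgY hgU
      have hAB : ι (st11ofR ((1 : C(X, ℝ)) - pick k (w k)))
          + ι (st11ofR (pick k (w k))) = 1 := by
        rw [← map_add, ← map_one ι]
        congr 1
        ext x'
        simp only [ContinuousMap.add_apply, st11ofR_apply, ContinuousMap.sub_apply,
          ContinuousMap.one_apply]
        push_cast
        ring
      have hid : w (k + 1) - w k = ι (st11ofR (pick k (w k))) * (v (k + 1) - w k) := by
        calc w (k + 1) - w k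
            = ι (st11ofR ((1 : C(X, ℝ)) - pick k (w k))) * w k
              + ι (st11ofR (pick k (w k))) * v (k + 1)
              - (ι (st11ofR ((1 : C(X, ℝ)) - pick k (w k)))
                + ι (st11ofR (pick k (w k)))) * w k := by rw [hwsucc k, hAB, one_mul]
          _ = ι (st11ofR (pick k (w k))) * (v (k + 1) - w k) := by noncomm_ring
      rw [hid, st11_fib_smul E ι hcentral hmodule hpos, st11ofR_apply]
      by_cases hgx : pick k (w k) x = 0
      · rw [hgx]
        simp [he_pos (k + 1) |>.le]
      · have hre := hgU x hgx
        have hfx : fibTwoNorm E x (v (k + 1) - w k) < e (k + 1) := by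
          unfold fibTwoNorm
          calc Real.sqrt ((E (star (v (k + 1) - w k) * (v (k + 1) - w k)) x).re)
              < Real.sqrt (e (k + 1) ^ 2) :=
                Real.sqrt_lt_sqrt (hpos _ x).1 hre
            _ = e (k + 1) := Real.sqrt_sq (he_pos (k + 1)).le
        have habs : ‖((pick k (w k) x : ℂ))‖ ≤ 1 := by
          rw [Complex.norm_real, Real.norm_eq_abs, abs_of_nonneg (hg01 x).1]
          exact (hg01 x).2
        calc ‖((pick k (w k) x : ℂ))‖ * fibTwoNorm E x (v (k + 1) - w k)
            ≤ 1 * fibTwoNorm E x (v (k + 1) - w k) :=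
              mul_le_mul_of_nonneg_right habs (st11_fib_nonneg E x _)
          _ ≤ e (k + 1) := by rw [one_mul]; exact hfx.le
    -- Cauchy over X for w
    have hwX : ∀ n m : ℕ, n ≤ m → ∀ x, fibTwoNorm E x (w m - w n) ≤ e n - e m := by
      intro n m hnm
      induction m, hnm using Nat.le_induction with
      | base => intro x; rw [sub_self, st11_fib_zero]; simp
      | succ m hm ihm =>
        intro x
        have hdec : w (m + 1) - w n = (w (m + 1) - w m) + (w m - w n) := by abel
        have htri := st11_fib_triangle E hpos hstar x (w (m + 1) - w m) (w m - w n)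
        rw [← hdec] at htri
        have h1 := hstep m x
        have h2 := ihm x
        have h3 : e (m + 1) = e m * 2⁻¹ := he_succ m
        have h4 := he_pos m
        calc fibTwoNorm E x (w (m + 1) - w n)
            ≤ e (m + 1) + (e n - e m) := by linarith
          _ ≤ e n - e (m + 1) := by rw [h3]; linarith
    have hwnorm : ∀ k, ‖w k‖ ≤ 1 := fun k => (hInv k).1
    have hwCauchy : ∀ ε > (0 : ℝ), ∃ N, ∀ m ≥ N, ∀ n ≥ N,
        Real.sqrt ‖E (star (w m - w n) * (w m - w n))‖ < ε := by
      intro ε hε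
      obtain ⟨N, hNe⟩ := exists_pow_lt_of_lt_one hε (show (2 : ℝ)⁻¹ < 1 by norm_num)
      refine ⟨N, fun m hm n hn => ?_⟩
      have hb : ∀ x, fibTwoNorm E x (w m - w n) ≤ e N := by
        intro x
        rcases le_total n m with h | h
        · have := hwX n m h x
          have h2 := he_mono hn
          have h3 := he_pos m
          linarith
        · rw [st11_fib_sub_symm]
          have := hwX m n h x
          have h2 := he_mono hm
          have h3 := he_pos n
          linarith
      have hnorm : ‖E (star (w m - w n) * (w m - w n))‖ ≤ e N ^ 2 := by
        rw [ContinuousMap.norm_le _ (by positivity)]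
        intro x
        have him := (hpos (w m - w n) x).2
        have hre := (hpos (w m - w n) x).1
        have habs : ‖E (star (w m - w n) * (w m - w n)) x‖
            = (E (star (w m - w n) * (w m - w n)) x).re := by
          rw [Complex.norm_def, Complex.normSq_apply, him]
          rw [mul_zero, add_zero, Real.sqrt_mul_self hre]
        rw [habs, ← st11_fib_sq E hpos]
        exact pow_le_pow_left₀ (st11_fib_nonneg E x _) (hb x) 2
      calc Real.sqrt ‖E (star (w m - w n) * (w m - w n))‖
          ≤ Real.sqrt (e N ^ 2) := Real.sqrt_le_sqrt hnorm
        _ = e N := Real.sqrt_sq (he_pos N).le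
        _ < ε := hNe
    obtain ⟨b, hb1, hb2⟩ := hcomp w hwnorm hwCauchy
    refine ⟨b, le_trans (st11_resCNorm_le_norm E Y b) hb1, ?_⟩
    intro ε hε
    obtain ⟨N1, hN1⟩ := hb2 (ε / 4) (by linarith)
    obtain ⟨k0, hk0⟩ := exists_pow_lt_of_lt_one (show (0 : ℝ) < ε / 4 by linarith)
      (show (2 : ℝ)⁻¹ < 1 by norm_num)
    set k : ℕ := max k0 N1 with hk
    have hek : e k < ε / 4 := lt_of_le_of_lt (he_mono (le_max_left _ _)) hk0
    refine ⟨NN k, fun n hn y hy => ?_⟩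
    have hdec : a n - b = (a n - a (NN k)) + (a (NN k) - s (NN k))
        + (s (NN k) - w k) + (w k - b) := by abel
    have htri : fibTwoNorm E y (a n - b) ≤ fibTwoNorm E y (a n - a (NN k))
        + fibTwoNorm E y (a (NN k) - s (NN k)) + fibTwoNorm E y (s (NN k) - w k)
        + fibTwoNorm E y (w k - b) := by
      rw [hdec]
      exact st11_fib_triangle4 E hpos hstar y _ _ _ _
    have hT1 : fibTwoNorm E y (a n - a (NN k)) < e (k + 3) :=
      hN0 k n (le_trans (hNN_geN0 le_rfl) hn) (NN k) (hNN_geN0 le_rfl) y hy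
    have hT2 : fibTwoNorm E y (a (NN k) - s (NN k)) ≤ e k :=
      le_trans (hfib_as _ y hy) (he_mono (le_trans (by omega) (hNN_ge1 k)))
    have hT3 : fibTwoNorm E y (s (NN k) - w k) = 0 := by
      rw [st11_fib_sub_symm]
      exact (hInv k).2 y hy
    have hT4 : fibTwoNorm E y (w k - b) < ε / 4 :=
      lt_of_le_of_lt (st11_fib_le_sqrt_norm E y (w k - b) hpos) (hN1 k (le_max_right _ _))
    have hT1' : e (k + 3) ≤ e k := he_mono (by omega)
    linarith [hek, hT1, hT2, hT3, hT4, htri, hT1']
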